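/- (Noiseless Wigner Distribution Deconvolution, full sampling) Let x, m ∈ ℂ^d and let Y ∈ ℂ^{d×d} have entries Y_{k,ℓ} = |Σ_{n=0}^{d-1} x_n m_{(n-ℓ) mod d} e^{-2πink/d}|^2. Then for each ω ∈ [d]_0, the ω-th column of F_d Y^T F_d^T equals d · (F_d(x ∘ S_ω conj(x))) ∘ R(F_d(m ∘ S_ω conj(m))). -/

import Mathlib

open Complex BigOperators Finset

/-- Discrete Fourier transform on `ℂ^d` (indexed by `ZMod d`). -/
noncomputable def dftV (d : ℕ) [NeZero d] (x : ZMod d → ℂ) : ZMod d → ℂ :=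
  fun k => ∑ n : ZMod d, x n *
    Complex.exp (-2 * Real.pi * Complex.I * (n.val : ℂ) * (k.val : ℂ) / (d : ℂ))

/-- Circular shift: `(S_ℓ x)_n = x_{n+ℓ}`. -/
def shiftV {d : ℕ} (ℓ : ZMod d) (x : ZMod d → ℂ) : ZMod d → ℂ := fun n => x (n + ℓ)

/-- Reversal: `(R x)_n = x_{-n}`. -/
def revV {d : ℕ} (x : ZMod d → ℂ) : ZMod d → ℂ := fun n => x (-n)

/-- Componentwise complex conjugation. -/
def conjV {d : ℕ} (x : ZMod d → ℂ) : ZMod d → ℂ := fun n => (starRingEnd ℂ) (x n)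

/-- Hadamard (componentwise) product. -/
def hadV {d : ℕ} (x y : ZMod d → ℂ) : ZMod d → ℂ := fun n => x n * y n

/-- Circular convolution. -/
noncomputable def convV (d : ℕ) [NeZero d] (x y : ZMod d → ℂ) : ZMod d → ℂ :=
  fun ℓ => ∑ n : ZMod d, x n * y (ℓ - n)

/-- Modulation: `(W_ℓ x)_n = x_n e^{2πiℓn/d}`. -/
noncomputable def modV {d : ℕ} (ℓ : ZMod d) (x : ZMod d → ℂ) : ZMod d → ℂ :=
  fun n => x n * Complex.exp (2 * Real.pi * Complex.I * (ℓ.val : ℂ) * (n.val : ℂ) / (d : ℂ))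

/-- The `d × d` DFT matrix. -/
noncomputable def dftMat (d : ℕ) : Matrix (ZMod d) (ZMod d) ℂ :=
  fun j k => Complex.exp (-2 * Real.pi * Complex.I * (j.val : ℂ) * (k.val : ℂ) / (d : ℂ))


noncomputable def eV (d : ℕ) (a : ZMod d) : ℂ :=
  Complex.exp (2 * Real.pi * Complex.I / d) ^ a.val

section eVlemmas
variable (d : ℕ) [NeZero d]

lemma zeta_pow_d : Complex.exp (2 * Real.pi * Complex.I / d) ^ d = 1 :=
  (Complex.isPrimitiveRoot_exp d (NeZero.ne d)).pow_eq_one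

lemma zeta_pow_mod (n : ℕ) :
    Complex.exp (2 * Real.pi * Complex.I / d) ^ (n % d) =
      Complex.exp (2 * Real.pi * Complex.I / d) ^ n := by
  conv_rhs => rw [← Nat.mod_add_div n d]
  rw [pow_add, pow_mul, zeta_pow_d, one_pow, mul_one]

lemma eV_nat (n : ℕ) :
    Complex.exp (2 * Real.pi * Complex.I * n / d) = eV d (n : ZMod d) := by
  have : (2 * Real.pi * Complex.I * n / d) = n * (2 * Real.pi * Complex.I / d) := by ring
  rw [this, Complex.exp_nat_mul, eV, ZMod.val_natCast, zeta_pow_mod]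

lemma eV_add (a b : ZMod d) : eV d (a + b) = eV d a * eV d b := by
  rw [eV, eV, eV, ← pow_add, ZMod.val_add, zeta_pow_mod]

lemma eV_zero : eV d 0 = 1 := by
  simp [eV, ZMod.val_zero]

lemma eV_mul_neg (a : ZMod d) : eV d a * eV d (-a) = 1 := by
  rw [← eV_add, add_neg_cancel, eV_zero]

lemma eV_inv (a : ZMod d) : (eV d a)⁻¹ = eV d (-a) :=
  inv_eq_of_mul_eq_one_right (eV_mul_neg d a)

lemma exp_eq (a b : ZMod d) :
    Complex.exp (-2 * Real.pi * Complex.I * (a.val : ℂ) * (b.val : ℂ) / d)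
      = eV d (-(a * b)) := by
  have h : (-2 * Real.pi * Complex.I * (a.val : ℂ) * (b.val : ℂ) / d)
      = -(2 * Real.pi * Complex.I * ((a.val * b.val : ℕ) : ℂ) / d) := by
    push_cast; ring
  rw [h, Complex.exp_neg, eV_nat, ← eV_inv]
  congr 2
  push_cast [ZMod.natCast_val, ZMod.cast_id]
  ring

lemma conj_eV (a : ZMod d) : (starRingEnd ℂ) (eV d a) = eV d (-a) := by
  rw [eV, map_pow, ← Complex.exp_conj]
  have : (starRingEnd ℂ) (2 * Real.pi * Complex.I / d) =
      -(2 * Real.pi * Complex.I / d) := by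
    simp [map_div₀, Complex.conj_I, map_ofNat]
    ring
  rw [this, Complex.exp_neg, inv_pow, ← eV, eV_inv]

lemma eV_ne_one {c : ZMod d} (hc : c ≠ 0) : eV d c ≠ 1 := by
  have h1 : 0 < c.val := Nat.pos_of_ne_zero (fun h => hc ((ZMod.val_eq_zero c).mp h))
  exact (Complex.isPrimitiveRoot_exp d (NeZero.ne d)).pow_ne_one_of_pos_of_lt h1.ne' (ZMod.val_lt c)

lemma sum_eV (c : ZMod d) :
    ∑ k : ZMod d, eV d (c * k) = if c = 0 then (d : ℂ) else 0 := by
  split_ifs with h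
  · simp [h, eV_zero, ZMod.card]
  · have key : ∑ k : ZMod d, eV d (c * k) = eV d c * ∑ k : ZMod d, eV d (c * k) := by
      rw [Finset.mul_sum]
      apply Fintype.sum_equiv (Equiv.subRight (1 : ZMod d))
      intro k
      simp only [Equiv.subRight_apply]
      rw [← eV_add]
      congr 1
      ring
    have h2 : (1 - eV d c) * ∑ k : ZMod d, eV d (c * k) = 0 := by
      rw [sub_mul, one_mul]; nth_rewrite 1 [key]; ring
    rcases mul_eq_zero.mp h2 with h3 | h3
    · exact absurd (by linear_combination -h3 : eV d c = 1) (eV_ne_one d h)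
    · exact h3
end eVlemmas

section main
variable (d : ℕ) [NeZero d]

lemma dftMat_eq' (a b : ZMod d) : dftMat d a b = eV d (-(a * b)) := exp_eq d a b
end main

/-- noiseless Wigner distribution deconvolution, full sampling. -/
theorem wdd_full (d : ℕ) [NeZero d] (x m : ZMod d → ℂ)
    (Y : Matrix (ZMod d) (ZMod d) ℂ)
    (hY : ∀ k ℓ : ZMod d, Y k ℓ =
      ((‖(∑ n : ZMod d, x n * m (n - ℓ) *
        Complex.exp (-2 * Real.pi * Complex.I * (n.val : ℂ) * (k.val : ℂ) / (d : ℂ)))‖) ^ 2 : ℂ)) :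
    ∀ ω α : ZMod d,
      (dftMat d * Y.transpose * (dftMat d).transpose) α ω =
        (d : ℂ) * (dftV d (hadV x (shiftV ω (conjV x))) α *
          revV (dftV d (hadV m (shiftV ω (conjV m)))) α) := by
  intro ω α
  have habs : ∀ z : ℂ, ((‖z‖ : ℂ)) ^ 2 = z * (starRingEnd ℂ) z := by
    intro z
    rw [← Complex.ofReal_pow, Complex.sq_norm, Complex.mul_conj]
  have hR : (d : ℂ) * (dftV d (hadV x (shiftV ω (conjV x))) α *
      revV (dftV d (hadV m (shiftV ω (conjV m)))) α)
      = (d : ℂ) * ((∑ n : ZMod d, x n * (starRingEnd ℂ) (x (n + ω)) * eV d (-(α * n))) *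
        (∑ j : ZMod d, m j * (starRingEnd ℂ) (m (j + ω)) * eV d (α * j))) := by
    simp only [dftV, hadV, shiftV, conjV, revV, exp_eq]
    congr 1
    congr 1
    · exact Finset.sum_congr rfl fun n _ => by
        rw [show -(n * α) = -(α * n) by ring]
    · exact Finset.sum_congr rfl fun j _ => by
        rw [show -(j * -α) = α * j by ring]
  rw [hR]
  calc (dftMat d * Y.transpose * (dftMat d).transpose) α ω
      = ∑ k : ZMod d, (∑ ℓ : ZMod d, eV d (-(α * ℓ)) * Y k ℓ) * eV d (-(ω * k)) := by
        simp only [Matrix.mul_apply, Matrix.transpose_apply, dftMat_eq']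
    _ = ∑ k : ZMod d, ∑ ℓ : ZMod d, ∑ n : ZMod d, ∑ n' : ZMod d,
          (x n * m (n - ℓ) * (starRingEnd ℂ) (x n') * (starRingEnd ℂ) (m (n' - ℓ)) *
            eV d (-(α * ℓ))) * eV d ((n' - n - ω) * k) := by
        refine Finset.sum_congr rfl fun k _ => ?_
        rw [Finset.sum_mul]
        refine Finset.sum_congr rfl fun ℓ _ => ?_
        rw [hY k ℓ]
        simp only [exp_eq]
        rw [habs]
        simp only [map_sum, map_mul, conj_eV, neg_neg]
        rw [Finset.sum_mul_sum, Finset.mul_sum, Finset.sum_mul]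
        refine Finset.sum_congr rfl fun n _ => ?_
        rw [Finset.mul_sum, Finset.sum_mul]
        refine Finset.sum_congr rfl fun n' _ => ?_
        rw [show (n' - n - ω) * k = -(n * k) + n' * k + -(ω * k) by ring, eV_add, eV_add]
        ring
    _ = ∑ ℓ : ZMod d, ∑ n : ZMod d, ∑ n' : ZMod d,
          (x n * m (n - ℓ) * (starRingEnd ℂ) (x n') * (starRingEnd ℂ) (m (n' - ℓ)) *
            eV d (-(α * ℓ))) * (if n' - n - ω = 0 then (d : ℂ) else 0) := by
        rw [Finset.sum_comm]
        refine Finset.sum_congr rfl fun ℓ _ => ?_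
        rw [Finset.sum_comm]
        refine Finset.sum_congr rfl fun n _ => ?_
        rw [Finset.sum_comm]
        refine Finset.sum_congr rfl fun n' _ => ?_
        rw [← Finset.mul_sum, sum_eV]
    _ = ∑ ℓ : ZMod d, ∑ n : ZMod d,
          (x n * m (n - ℓ) * (starRingEnd ℂ) (x (n + ω)) * (starRingEnd ℂ) (m (n + ω - ℓ)) *
            eV d (-(α * ℓ))) * (d : ℂ) := by
        refine Finset.sum_congr rfl fun ℓ _ => Finset.sum_congr rfl fun n _ => ?_
        simp only [sub_sub, sub_eq_zero, mul_ite, mul_zero]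
        rw [Finset.sum_ite_eq' Finset.univ (n + ω)]
        simp
    _ = (d : ℂ) * ((∑ n : ZMod d, x n * (starRingEnd ℂ) (x (n + ω)) * eV d (-(α * n))) *
          (∑ j : ZMod d, m j * (starRingEnd ℂ) (m (j + ω)) * eV d (α * j))) := by
        rw [Finset.sum_comm, Finset.sum_mul_sum, Finset.mul_sum]
        refine Finset.sum_congr rfl fun n _ => ?_
        rw [Finset.mul_sum]
        apply Fintype.sum_equiv (Equiv.subLeft n)
        intro ℓ
        simp only [Equiv.subLeft_apply]
        rw [show n + ω - ℓ = (n - ℓ) + ω by ring,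
          show -(α * ℓ) = -(α * n) + α * (n - ℓ) by ring, eV_add]
        ring
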